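/- Let β ∈ ℂ with β ∉ ℝ and |β| ≠ 1. Then ((β − 1)/(β + 1))² is not a real number. Moreover, for any β ∈ ℂ with β ∉ {1, −1}, the derivative of g_β = h_β ∘ h_β at the point 1 equals ((β − 1)/(β + 1))². -/

import Mathlib

/-- The Möbius map `h_β(z) = (βz + 1)/(β + z)`. -/
noncomputable def hMap (β z : ℂ) : ℂ := (β * z + 1) / (β + z)

/-- For non-real `β` with `|β| ≠ 1`, `((β − 1)/(β + 1))²` is not real; moreover, for any
`β ∉ {1, −1}`, the derivative of `g_β = h_β ∘ h_β` at `1` equals `((β − 1)/(β + 1))²`. -/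
theorem multiplier_properties :
    (∀ β : ℂ, β ∉ Set.range ((↑) : ℝ → ℂ) → ‖β‖ ≠ 1 →
      ((β - 1) / (β + 1)) ^ 2 ∉ Set.range ((↑) : ℝ → ℂ))
    ∧ (∀ β : ℂ, β ≠ 1 → β ≠ -1 →
      deriv (fun z => hMap β (hMap β z)) 1 = ((β - 1) / (β + 1)) ^ 2) := by
  constructor
  · intro β hβ habs hmem
    -- β.im ≠ 0
    have hy : β.im ≠ 0 := by
      intro h
      exact hβ ⟨β.re, by apply Complex.ext <;> simp [h]⟩
    have hne : β + 1 ≠ 0 := by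
      intro h
      apply hy
      have := congrArg Complex.im h
      simpa using this
    obtain ⟨r, hr⟩ := hmem
    have key : (β - 1) ^ 2 = (r : ℂ) * (β + 1) ^ 2 := by
      have : ((β - 1) / (β + 1)) ^ 2 * (β + 1) ^ 2 = (r : ℂ) * (β + 1) ^ 2 := by
        rw [hr]
      field_simp at this
      exact this.trans (mul_comm _ _)
    have him := congrArg Complex.im key
    have hre := congrArg Complex.re key
    simp [Complex.ext_iff, Complex.add_im, Complex.add_re, pow_two, Complex.mul_im,
      Complex.mul_re, Complex.sub_im, Complex.sub_re] at him hre
    set x := β.re with hx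
    set y := β.im with hyy
    -- from the imaginary parts: (x-1) = r*(x+1)
    have eqA : x - 1 = r * (x + 1) := by
      have h' : (x - 1) * y = (r * (x + 1)) * y := by ring_nf; ring_nf at him; linarith
      exact mul_right_cancel₀ hy h'
    have eqB : (x - 1) ^ 2 - y ^ 2 = r * ((x + 1) ^ 2 - y ^ 2) := by
      ring_nf; ring_nf at hre; linarith
    have hsum : x ^ 2 + y ^ 2 = 1 := by
      linear_combination (((x + 1) ^ 2 - y ^ 2) / 2) * eqA - ((x + 1) / 2) * eqB
    apply habs
    have : ‖β‖ ^ 2 = 1 := by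
      rw [Complex.sq_norm, Complex.normSq_apply]
      simpa [pow_two] using hsum
    nlinarith [norm_nonneg β]
  · intro β hβ1 hβ2
    have hne : β + 1 ≠ 0 := by
      intro h
      exact hβ2 (by linear_combination h)
    have hd : HasDerivAt (hMap β) ((β - 1) / (β + 1)) 1 := by
      have hnum : HasDerivAt (fun z : ℂ => β * z + 1) β 1 := by
        simpa using ((hasDerivAt_id (1 : ℂ)).const_mul β).add_const 1
      have hden : HasDerivAt (fun z : ℂ => β + z) 1 1 := by
        simpa using (hasDerivAt_id (1 : ℂ)).const_add β
      have := hnum.div hden (by simpa using hne)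
      refine this.congr_deriv ?_
      field_simp
    have h1 : hMap β 1 = 1 := by
      unfold hMap
      rw [mul_one, div_self hne]
    have hd2 : HasDerivAt (fun z => hMap β (hMap β z))
        (((β - 1) / (β + 1)) * ((β - 1) / (β + 1))) 1 := by
      have hd' : HasDerivAt (hMap β) ((β - 1) / (β + 1)) (hMap β 1) := by rw [h1]; exact hd
      exact hd'.comp 1 hd
    rw [hd2.deriv]
    ring
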